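/- Fix 0 < λ < 1/3 and let A be the attractor of f_j(z) = 1 + λ e^{(−1)^j iπ/3} z (j = 1,2). Let Y''_j be the line parallel to Y_j := f_j({x = 0}) passing through P := (1 + λ/2, 0). Then dist(f_j(A), Y''_j) ≥ (3/4)λ > (2/√3)λ². -/

import Mathlib

open Complex

/-- θ_j = λ e^{(−1)^j iπ/3}. -/
noncomputable def theta (lam : ℝ) (j : ℕ) : ℂ :=
  (lam : ℂ) * Complex.exp ((-1 : ℂ) ^ j * Complex.I * (Real.pi / 3))

/-- The contracting similarity f_j(z) = 1 + θ_j z of ℂ. -/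
noncomputable def fmap (lam : ℝ) (j : ℕ) (z : ℂ) : ℂ := 1 + theta lam j * z

/-- The line through the point w₀ parallel to f_j(Y), Y = {x = 0}: its direction is
i·θ_j, so it is {w₀ + θ_j z : Re z = 0}. -/
def lineThrough (lam : ℝ) (j : ℕ) (w₀ : ℂ) : Set ℂ :=
  {w : ℂ | ∃ z : ℂ, z.re = 0 ∧ w = w₀ + theta lam j * z}

/-- The unit direction e^{(−1)^j iπ/3}. -/
noncomputable def uu (j : ℕ) : ℂ := Complex.exp ((-1 : ℂ) ^ j * Complex.I * (Real.pi / 3))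

lemma theta_eq (lam : ℝ) (j : ℕ) : theta lam j = (lam : ℂ) * uu j := rfl

lemma abs_uu (j : ℕ) : ‖uu j‖ = 1 := by
  rw [uu, Complex.norm_exp]
  have : ((-1 : ℂ) ^ j * Complex.I * (Real.pi / 3)).re = 0 := by
    rcases Nat.even_or_odd j with h | h
    · rw [h.neg_one_pow]; simp
    · rw [h.neg_one_pow]; simp
  rw [this, Real.exp_zero]

lemma re_uu (j : ℕ) (hj : j = 1 ∨ j = 2) : (uu j).re = 1 / 2 := by
  rcases hj with rfl | rfl
  · have h : (-1 : ℂ) ^ 1 * Complex.I * (Real.pi / 3) = (↑(-(Real.pi/3)) : ℂ) * Complex.I := by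
      push_cast; ring
    rw [uu, h, Complex.exp_ofReal_mul_I_re, Real.cos_neg, Real.cos_pi_div_three]
  · have h : (-1 : ℂ) ^ 2 * Complex.I * (Real.pi / 3) = (↑(Real.pi/3) : ℂ) * Complex.I := by
      push_cast; ring
    rw [uu, h, Complex.exp_ofReal_mul_I_re, Real.cos_pi_div_three]

/-- For 0 < λ < 1/3, with Y''_j the line through P = (1 + λ/2, 0) parallel to
Y_j = f_j({x = 0}): dist(f_j(A), Y''_j) ≥ (3/4)λ > (2/√3)λ². -/
theorem dist_piece_line (lam : ℝ) (h0 : 0 < lam) (h1 : lam < 1 / 3)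
    (A : Set ℂ) (hne : A.Nonempty) (hcpt : IsCompact A)
    (hA : A = fmap lam 1 '' A ∪ fmap lam 2 '' A) :
    (∀ j : ℕ, j = 1 ∨ j = 2 →
      ∀ a ∈ fmap lam j '' A, ∀ w ∈ lineThrough lam j (((1 + lam / 2 : ℝ) : ℂ)),
        3 / 4 * lam ≤ dist a w) ∧
    2 / Real.sqrt 3 * lam ^ 2 < 3 / 4 * lam := by
  have hlam1 : lam < 1 := by linarith
  -- every element of A is in the image of some piece
  have hmem : ∀ b ∈ A, ∃ j, (j = 1 ∨ j = 2) ∧ ∃ b' ∈ A, b = fmap lam j b' := by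
    intro b hb
    rw [hA] at hb
    rcases hb with ⟨b', hb', rfl⟩ | ⟨b', hb', rfl⟩
    · exact ⟨1, Or.inl rfl, b', hb', rfl⟩
    · exact ⟨2, Or.inr rfl, b', hb', rfl⟩
  have habs_theta : ∀ j : ℕ, ‖theta lam j‖ = lam := by
    intro j
    rw [theta_eq, norm_mul, abs_uu, Complex.norm_real, Real.norm_eq_abs, abs_of_pos h0, mul_one]
  -- uniform bound: ‖b‖ ≤ 1/(1−λ) on A
  set M : ℝ := 1 / (1 - lam) with hM
  have hMbound : ∀ b ∈ A, ‖b‖ ≤ M := by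
    obtain ⟨a₀, ha₀A, hmax⟩ := hcpt.exists_isMaxOn hne continuous_norm.continuousOn
    have hbound : ‖a₀‖ ≤ M := by
      obtain ⟨j, hj, b', hb', heq⟩ := hmem a₀ ha₀A
      have h1' : ‖a₀‖ ≤ 1 + lam * ‖a₀‖ := by
        conv_lhs => rw [heq, fmap]
        calc ‖1 + theta lam j * b'‖ ≤
            ‖(1 : ℂ)‖ + ‖theta lam j * b'‖ := by
              exact norm_add_le _ _
          _ = 1 + lam * ‖b'‖ := by rw [norm_one, norm_mul, habs_theta]
          _ ≤ 1 + lam * ‖a₀‖ := by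
              have hbb : ‖b'‖ ≤ ‖a₀‖ := hmax hb'
              nlinarith [hbb]
      rw [show M = 1 / (1 - lam) from hM, le_div_iff₀ (by linarith : (0:ℝ) < 1 - lam)]
      nlinarith [h1']
    intro b hb
    exact le_trans (hmax hb) hbound
  -- step 1: Re (u_j * b) ≥ 1/2 − λ M for b ∈ A
  have hstep1 : ∀ j : ℕ, (j = 1 ∨ j = 2) → ∀ b ∈ A, 1/2 - lam * M ≤ (uu j * b).re := by
    intro j hj b hb
    obtain ⟨k, hk, b', hb', rfl⟩ := hmem b hb
    have hexp : uu j * fmap lam k b' = uu j + (lam : ℂ) * (uu j * uu k * b') := by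
      rw [fmap, theta_eq]; ring
    rw [hexp]
    have hre : (uu j + (lam : ℂ) * (uu j * uu k * b')).re
        = (uu j).re + lam * (uu j * uu k * b').re := by
      simp [Complex.add_re, Complex.re_ofReal_mul]
    rw [hre, re_uu j hj]
    have habs : ‖uu j * uu k * b'‖ = ‖b'‖ := by
      rw [norm_mul, norm_mul, abs_uu, abs_uu, one_mul, one_mul]
    have h2 : -(‖b'‖) ≤ (uu j * uu k * b').re := by
      rw [← habs]
      exact neg_le_of_abs_le (Complex.abs_re_le_norm _)
    have h3 := hMbound b' hb'
    nlinarith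
  -- step 2: Re b ≥ 1 + λ/2 − λ² M for b ∈ A
  have hstep2 : ∀ b ∈ A, 1 + lam / 2 - lam ^ 2 * M ≤ b.re := by
    intro b hb
    obtain ⟨j, hj, b', hb', rfl⟩ := hmem b hb
    have hre : (fmap lam j b').re = 1 + lam * (uu j * b').re := by
      rw [fmap, theta_eq]
      have : (1 : ℂ) + (lam : ℂ) * uu j * b' = 1 + (lam : ℂ) * (uu j * b') := by ring
      rw [this]
      simp [Complex.add_re, Complex.re_ofReal_mul]
    rw [hre]
    have := hstep1 j hj b' hb'
    nlinarith
  constructor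
  · intro j hj a ha w hw
    obtain ⟨b, hb, rfl⟩ := ha
    obtain ⟨z, hz, rfl⟩ := hw
    -- a − w = λ u_j (b − z) − λ/2
    have hdiff : fmap lam j b - (((1 + lam / 2 : ℝ) : ℂ) + theta lam j * z)
        = (lam : ℂ) * uu j * (b - z) - ((lam / 2 : ℝ) : ℂ) := by
      rw [fmap, theta_eq]
      push_cast
      ring
    have key : 3 / 4 * lam ≤
        ‖fmap lam j b - (((1 + lam / 2 : ℝ) : ℂ) + theta lam j * z)‖ := by
      rw [hdiff]
      set v : ℂ := (lam : ℂ) * uu j * (b - z) - ((lam / 2 : ℝ) : ℂ) with hv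
      have habs_eq : ‖v * (starRingEnd ℂ) (uu j)‖ = ‖v‖ := by
        rw [norm_mul, Complex.norm_conj, abs_uu, mul_one]
      have hre_le : (v * (starRingEnd ℂ) (uu j)).re ≤ ‖v‖ := by
        rw [← habs_eq]; exact Complex.re_le_norm _
      have hmc : uu j * (starRingEnd ℂ) (uu j) = 1 := by
        rw [Complex.mul_conj, Complex.normSq_eq_norm_sq, abs_uu]; norm_num
      have hexp : v * (starRingEnd ℂ) (uu j)
          = (lam : ℂ) * (b - z) - ((lam / 2 : ℝ) : ℂ) * (starRingEnd ℂ) (uu j) := by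
        rw [hv]
        calc ((lam : ℂ) * uu j * (b - z) - ((lam / 2 : ℝ) : ℂ)) * (starRingEnd ℂ) (uu j)
            = (lam : ℂ) * (uu j * (starRingEnd ℂ) (uu j)) * (b - z)
              - ((lam / 2 : ℝ) : ℂ) * (starRingEnd ℂ) (uu j) := by ring
          _ = _ := by rw [hmc]; ring
      have hre_val : (v * (starRingEnd ℂ) (uu j)).re = lam * b.re - lam / 4 := by
        rw [hexp]
        have : (((lam / 2 : ℝ) : ℂ) * (starRingEnd ℂ) (uu j)).re
            = lam / 2 * (uu j).re := by
          rw [Complex.re_ofReal_mul, Complex.conj_re]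
        simp only [Complex.sub_re, Complex.re_ofReal_mul, this, re_uu j hj,
          Complex.sub_re, hz]
        ring
      have hb_re := hstep2 b hb
      have hMval : lam ^ 2 * M ≤ lam / 2 := by
        have hpos : (0:ℝ) < 1 - lam := by linarith
        have heq : lam ^ 2 * M = lam ^ 2 / (1 - lam) := by
          rw [show M = 1 / (1 - lam) from hM]; ring
        rw [heq, div_le_iff₀ hpos]
        nlinarith [sq_nonneg lam]
      calc 3 / 4 * lam ≤ lam * b.re - lam / 4 := by nlinarith
        _ = (v * (starRingEnd ℂ) (uu j)).re := hre_val.symm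
        _ ≤ ‖v‖ := hre_le
    calc 3 / 4 * lam ≤ _ := key
      _ = dist (fmap lam j b) (((1 + lam / 2 : ℝ) : ℂ) + theta lam j * z) := by
        rw [Complex.dist_eq]
  · have hs : (1 : ℝ) ≤ Real.sqrt 3 := by
      rw [show (1:ℝ) = Real.sqrt 1 from (Real.sqrt_one).symm]
      exact Real.sqrt_le_sqrt (by norm_num)
    have h2 : 2 / Real.sqrt 3 ≤ 2 := by
      rw [div_le_iff₀ (by linarith : (0:ℝ) < Real.sqrt 3)]
      nlinarith
    nlinarith [sq_nonneg lam]
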